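/- Under the compatibility condition for S₀ with constant φ > 0 and on the event where λ ≥ 2λ₀ with λ₀ bounding (2/n)‖Xᵀε‖_∞, the Lasso satisfies the oracle inequality (1/n)‖X(β̂ − β⁰)‖₂² + λ‖β̂ − β⁰‖₁ ≤ 4λ²s₀/φ², where s₀ = |S₀| and S₀ = supp(β⁰). -/

import Mathlib

open Matrix Finset

set_option maxHeartbeats 1000000 in
theorem lasso_oracle_inequality
    {n p : ℕ} (hn : 0 < n)
    (X : Matrix (Fin n) (Fin p) ℝ)
    (β0 βhat : Fin p → ℝ) (ε : Fin n → ℝ) (Y : Fin n → ℝ)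
    (hY : Y = fun i => X.mulVec β0 i + ε i)
    (S0 : Finset (Fin p)) (hS0 : ∀ j, j ∈ S0 ↔ β0 j ≠ 0)
    (φ : ℝ) (hφ : 0 < φ)
    -- compatibility condition for S0 with constant φ
    (hcompat : ∀ Δ : Fin p → ℝ,
      (∑ j ∈ S0ᶜ, |Δ j|) ≤ 3 * ∑ j ∈ S0, |Δ j| →
      (∑ j ∈ S0, |Δ j|) ≠ 0 →
      (∑ j ∈ S0, |Δ j|) ^ 2 ≤
        (S0.card : ℝ) * ((1 / n) * ∑ i, (X.mulVec Δ i) ^ 2) / φ ^ 2)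
    (lam lam0 : ℝ)
    -- (2/n)‖Xᵀε‖_∞ ≤ λ₀ and λ ≥ 2λ₀
    (hlam0 : ∀ j, (2 / n : ℝ) * |∑ i, X i j * ε i| ≤ lam0)
    (hlam : 2 * lam0 ≤ lam) (hlam0pos : 0 ≤ lam0)
    -- β̂ minimizes the Lasso objective
    (hmin : ∀ β : Fin p → ℝ,
      (1 / n : ℝ) * ∑ i, (Y i - X.mulVec βhat i) ^ 2 + lam * ∑ j, |βhat j| ≤
        (1 / n : ℝ) * ∑ i, (Y i - X.mulVec β i) ^ 2 + lam * ∑ j, |β j|) :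
    (1 / n : ℝ) * ∑ i, (X.mulVec (βhat - β0) i) ^ 2 +
        lam * ∑ j, |βhat j - β0 j| ≤
      4 * lam ^ 2 * (S0.card : ℝ) / φ ^ 2 := by
  have hn' : (0:ℝ) < n := by exact_mod_cast hn
  set D : Fin n → ℝ := X.mulVec (βhat - β0) with hD
  set Q : ℝ := (1/n : ℝ) * ∑ i, (D i)^2 with hQdef
  set a : ℝ := ∑ j ∈ S0, |βhat j - β0 j| with hadef
  set b : ℝ := ∑ j ∈ S0ᶜ, |βhat j - β0 j| with hbdef
  have hQ0 : 0 ≤ Q := by positivity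
  have ha0 : 0 ≤ a := Finset.sum_nonneg fun j _ => abs_nonneg _
  have hb0 : 0 ≤ b := Finset.sum_nonneg fun j _ => abs_nonneg _
  have hlampos : 0 ≤ lam := le_trans (by linarith) hlam
  have hab : ∑ j, |βhat j - β0 j| = a + b := by
    rw [hadef, hbdef, Finset.sum_add_sum_compl]
  have hDpt : ∀ i, D i = X.mulVec βhat i - X.mulVec β0 i := by
    intro i; rw [hD, Matrix.mulVec_sub]; rfl
  -- basic inequality from minimality at β0
  have hQle : Q ≤ (2/n) * (∑ i, ε i * D i) +
      lam * ((∑ j, |β0 j|) - ∑ j, |βhat j|) := by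
    have h := hmin β0
    rw [hY] at h
    have e0 : ∑ i, ((fun i => X.mulVec β0 i + ε i) i - X.mulVec β0 i)^2
        = ∑ i, (ε i)^2 := by
      apply Finset.sum_congr rfl; intro i _; ring
    have e1 : ∑ i, ((fun i => X.mulVec β0 i + ε i) i - X.mulVec βhat i)^2
        = (∑ i, (ε i)^2) - 2*(∑ i, ε i * D i) + ∑ i, (D i)^2 := by
      have hpt : ∀ i, ((fun i => (X.mulVec β0) i + ε i) i - (X.mulVec βhat) i)^2
          = ε i ^2 - 2*(ε i * D i) + D i^2 := by
        intro i; rw [hDpt i]; ring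
      rw [Finset.sum_congr rfl (fun i _ => hpt i), Finset.sum_add_distrib,
        Finset.sum_sub_distrib, ← Finset.mul_sum]
    rw [e0, e1] at h
    have expand : (1/n : ℝ) * ((∑ i, (ε i)^2) - 2*(∑ i, ε i * D i) + ∑ i, (D i)^2)
        = (1/n : ℝ) * (∑ i, (ε i)^2) - (2/n) * (∑ i, ε i * D i)
          + (1/n : ℝ) * ∑ i, (D i)^2 := by ring
    rw [expand] at h
    rw [hQdef]; linarith
  -- cross term bound
  have hswap : ∑ i, ε i * D i
      = ∑ j, (βhat j - β0 j) * (∑ i, X i j * ε i) := by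
    simp only [hD, Matrix.mulVec, dotProduct, Pi.sub_apply, Finset.mul_sum]
    rw [Finset.sum_comm]
    exact Finset.sum_congr rfl fun j _ => Finset.sum_congr rfl fun i _ => by ring
  have hcross : (2/n) * (∑ i, ε i * D i) ≤ lam0 * (a + b) := by
    rw [hswap, ← hab, Finset.mul_sum, Finset.mul_sum]
    apply Finset.sum_le_sum
    intro j _
    calc (2/n:ℝ) * ((βhat j - β0 j) * (∑ i, X i j * ε i))
        ≤ (2/n:ℝ) * |(βhat j - β0 j) * (∑ i, X i j * ε i)| := by
          apply mul_le_mul_of_nonneg_left (le_abs_self _) (by positivity)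
      _ = |βhat j - β0 j| * ((2/n:ℝ) * |∑ i, X i j * ε i|) := by
          rw [abs_mul]; ring
      _ ≤ |βhat j - β0 j| * lam0 :=
          mul_le_mul_of_nonneg_left (hlam0 j) (abs_nonneg _)
      _ = lam0 * |βhat j - β0 j| := mul_comm _ _
  -- ℓ1 decomposition
  have hl1 : (∑ j, |β0 j|) - ∑ j, |βhat j| ≤ a - b := by
    have h0 : ∀ j ∈ S0ᶜ, β0 j = 0 := by
      intro j hj
      by_contra hne
      exact (Finset.mem_compl.mp hj) ((hS0 j).mpr hne)
    have eβ0 : ∑ j, |β0 j| = ∑ j ∈ S0, |β0 j| := by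
      rw [← Finset.sum_add_sum_compl S0 (fun j => |β0 j|)]
      have : ∑ j ∈ S0ᶜ, |β0 j| = 0 :=
        Finset.sum_eq_zero fun j hj => by rw [h0 j hj, abs_zero]
      rw [this, add_zero]
    have eβhat : ∑ j, |βhat j| = (∑ j ∈ S0, |βhat j|) + b := by
      rw [← Finset.sum_add_sum_compl S0 (fun j => |βhat j|)]
      congr 1
      exact Finset.sum_congr rfl fun j hj => by rw [h0 j hj, sub_zero]
    have htr : ∑ j ∈ S0, (|β0 j| - |βhat j|) ≤ a := by
      apply Finset.sum_le_sum
      intro j _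
      calc |β0 j| - |βhat j| ≤ |β0 j - βhat j| := abs_sub_abs_le_abs_sub _ _
        _ = |βhat j - β0 j| := abs_sub_comm _ _
    rw [Finset.sum_sub_distrib] at htr
    rw [eβ0, eβhat]; linarith
  -- combine into the key inequality  2Q + λb ≤ 3λa
  have hl0 : lam0 * (a+b) ≤ (lam/2) * (a+b) :=
    mul_le_mul_of_nonneg_right (by linarith) (by linarith)
  have hll : lam * ((∑ j, |β0 j|) - ∑ j, |βhat j|) ≤ lam * (a - b) :=
    mul_le_mul_of_nonneg_left hl1 hlampos
  have hbasic : 2*Q + lam*b ≤ 3*(lam*a) := by nlinarith [hQle, hcross, hl0, hll]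
  have hRHS0 : (0:ℝ) ≤ 4 * lam ^ 2 * (S0.card : ℝ) / φ ^ 2 := by positivity
  rw [hab]
  by_cases hza : a = 0
  · have : lam * b ≥ 0 := mul_nonneg hlampos hb0
    have : Q + lam * (a + b) ≤ 0 := by rw [hza] at hbasic ⊢; linarith
    linarith
  by_cases hzl : lam = 0
  · have : Q + lam * (a + b) ≤ 0 := by rw [hzl] at hbasic ⊢; linarith
    linarith
  have hlpos : 0 < lam := lt_of_le_of_ne hlampos (Ne.symm hzl)
  -- b ≤ 3a, apply compatibility
  have hb3a : b ≤ 3 * a := by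
    have hh : lam * b ≤ lam * (3 * a) := by linarith
    exact (mul_le_mul_iff_right₀ hlpos).mp hh
  have hcomp := hcompat (βhat - β0)
  simp only [Pi.sub_apply] at hcomp
  have hc : a^2 ≤ (S0.card : ℝ) * Q / φ^2 := hcomp hb3a hza
  set c : ℝ := (S0.card : ℝ) with hcdef
  have hc0 : 0 ≤ c := Nat.cast_nonneg _
  have hc' : a^2 * φ^2 ≤ c * Q := by
    rw [← le_div_iff₀ (by positivity : (0:ℝ) < φ^2)]; exact hc
  set r : ℝ := Real.sqrt Q with hr
  set t : ℝ := Real.sqrt c with ht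
  have hr0 : 0 ≤ r := Real.sqrt_nonneg _
  have ht0 : 0 ≤ t := Real.sqrt_nonneg _
  have hrQ : r^2 = Q := Real.sq_sqrt hQ0
  have htc : t^2 = c := Real.sq_sqrt hc0
  have haφ : a * φ ≤ r * t := by
    have h1 : (a*φ)^2 ≤ (r*t)^2 := by
      rw [mul_pow, mul_pow, hrQ, htc]; linarith [hc']
    have h2 := Real.sqrt_le_sqrt h1
    rwa [Real.sqrt_sq (by positivity), Real.sqrt_sq (mul_nonneg hr0 ht0)] at h2
  rw [le_div_iff₀ (by positivity : (0:ℝ) < φ^2)]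
  have s1 : Q + lam*(a+b) ≤ 4*(lam*a) - Q := by linarith
  have s2 : (Q + lam*(a+b))*φ^2 ≤ (4*(lam*a) - Q)*φ^2 :=
    mul_le_mul_of_nonneg_right s1 (by positivity)
  have h4 : 4*lam*φ*(a*φ) ≤ 4*lam*φ*(r*t) :=
    mul_le_mul_of_nonneg_left haφ (by positivity)
  have hQφ : Q*φ^2 = r^2*φ^2 := by rw [hrQ]
  have hclam : 4*lam^2*c = 4*lam^2*t^2 := by rw [htc]
  nlinarith [s2, h4, hQφ, hclam, sq_nonneg (r*φ - 2*lam*t)]
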